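/- There exist absolute constants c, C > 0 with the following property. For every d ≥ 1, every matrix A ∈ ℝ^{d×d}, every δ ∈ (0, 1/2], and every integer ℓ ≥ c·log(1/δ), the Hutchinson estimator H_ℓ(A) satisfies |H_ℓ(A) − tr(A)| ≤ C·√(log(1/δ)/ℓ)·‖A‖_F with probability at least 1 − δ. -/

import Mathlib

set_option maxHeartbeats 1000000


open MeasureTheory Matrix

/-- The Frobenius norm of a real matrix. -/
noncomputable def frobNorm {m n : ℕ} (M : Matrix (Fin m) (Fin n) ℝ) : ℝ :=
  Real.sqrt (∑ i, ∑ j, (M i j) ^ 2)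

/-- The Rademacher distribution on `ℝ`: uniform on `{-1, +1}`. -/
noncomputable def rademacher : Measure ℝ :=
  ((1 : ENNReal) / 2) • Measure.dirac (-1) + ((1 : ENNReal) / 2) • Measure.dirac 1

instance : IsProbabilityMeasure rademacher := by
  constructor
  simp [rademacher]
  exact ENNReal.inv_two_add_inv_two

/-- The law of a `d × n` random matrix with i.i.d. Rademacher entries
(as a product measure on `Fin d → Fin n → ℝ`). -/
noncomputable def radMeasure (d n : ℕ) : Measure (Fin d → Fin n → ℝ) :=
  Measure.pi fun _ => Measure.pi fun _ => rademacher

/-- Hutchinson's estimator with `n` queries, evaluated at the query matrix `g`. -/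
noncomputable def hutch {d n : ℕ} (A : Matrix (Fin d) (Fin d) ℝ)
    (g : Fin d → Fin n → ℝ) : ℝ :=
  (1 / (n : ℝ)) * ((Matrix.of g)ᵀ * A * Matrix.of g).trace

namespace HW

open Finset

noncomputable def sgn (b : Bool) : ℝ := if b then 1 else -1

lemma sgn_mul_self (b : Bool) : sgn b * sgn b = 1 := by cases b <;> norm_num [sgn]

noncomputable def quad {n : ℕ} (M : Matrix (Fin n) (Fin n) ℝ) (x : Fin n → ℝ) : ℝ :=
  ∑ i, ∑ j, M i j * x i * x j

noncomputable def offSq {n : ℕ} (M : Matrix (Fin n) (Fin n) ℝ) : ℝ :=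
  ∑ i, ∑ j, if i = j then (0:ℝ) else (M i j)^2

lemma offSq_nonneg {n : ℕ} (M : Matrix (Fin n) (Fin n) ℝ) : 0 ≤ offSq M := by
  refine Finset.sum_nonneg fun i _ => Finset.sum_nonneg fun j _ => ?_
  split <;> positivity

lemma quad_add {n : ℕ} (M N : Matrix (Fin n) (Fin n) ℝ) (x : Fin n → ℝ) :
    quad (M + N) x = quad M x + quad N x := by
  unfold quad
  rw [← Finset.sum_add_distrib]
  refine Finset.sum_congr rfl fun i _ => ?_
  rw [← Finset.sum_add_distrib]
  refine Finset.sum_congr rfl fun j _ => ?_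
  simp [Matrix.add_apply]; ring

lemma quad_smul {n : ℕ} (r : ℝ) (M : Matrix (Fin n) (Fin n) ℝ) (x : Fin n → ℝ) :
    quad (r • M) x = r * quad M x := by
  unfold quad
  rw [Finset.mul_sum]
  refine Finset.sum_congr rfl fun i _ => ?_
  rw [Finset.mul_sum]
  refine Finset.sum_congr rfl fun j _ => ?_
  simp [Matrix.smul_apply]; ring

lemma offSq_smul {n : ℕ} (r : ℝ) (M : Matrix (Fin n) (Fin n) ℝ) :
    offSq (r • M) = r^2 * offSq M := by
  unfold offSq
  rw [Finset.mul_sum]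
  refine Finset.sum_congr rfl fun i _ => ?_
  rw [Finset.mul_sum]
  refine Finset.sum_congr rfl fun j _ => ?_
  split <;> simp [Matrix.smul_apply] <;> ring

lemma trace_succ {n : ℕ} (M : Matrix (Fin (n+1)) (Fin (n+1)) ℝ) :
    M.trace = M 0 0 + (M.submatrix Fin.succ Fin.succ).trace := by
  simp [Matrix.trace, Matrix.diag, Fin.sum_univ_succ]

lemma zero_ne_succ' {n : ℕ} (x : Fin n) : (0 : Fin (n+1)) ≠ x.succ :=
  (Fin.succ_ne_zero x).symm

lemma offSq_succ {n : ℕ} (M : Matrix (Fin (n+1)) (Fin (n+1)) ℝ) :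
    offSq M = (∑ j : Fin n, ((M 0 j.succ)^2 + (M j.succ 0)^2))
      + offSq (M.submatrix Fin.succ Fin.succ) := by
  unfold offSq
  simp only [Fin.sum_univ_succ, Matrix.submatrix_apply, Fin.succ_inj,
    Fin.succ_ne_zero, zero_ne_succ', if_true, if_false, if_pos rfl, ite_false]
  rw [Finset.sum_add_distrib, Finset.sum_add_distrib]
  ring


lemma quad_cons {n : ℕ} (M : Matrix (Fin (n+1)) (Fin (n+1)) ℝ) (b : Bool) (x : Fin n → ℝ) :
    quad M (Fin.cons (sgn b) x) =
      M 0 0 + sgn b * (∑ j : Fin n, (M 0 j.succ + M j.succ 0) * x j)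
        + quad (M.submatrix Fin.succ Fin.succ) x := by
  have hb := sgn_mul_self b
  unfold quad
  simp only [Fin.sum_univ_succ, Fin.cons_zero, Fin.cons_succ, Matrix.submatrix_apply]
  rw [Finset.mul_sum, Finset.sum_add_distrib]
  have h1 : ∀ j : Fin n, sgn b * ((M 0 j.succ + M j.succ 0) * x j)
      = M 0 j.succ * sgn b * x j + M j.succ 0 * x j * sgn b := fun j => by ring
  simp_rw [h1]
  rw [Finset.sum_add_distrib]
  have h0 : M 0 0 * sgn b * sgn b = M 0 0 := by rw [mul_assoc, hb, mul_one]
  rw [h0]; ring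


lemma offSq_rank1_bound {n : ℕ} (M' : Matrix (Fin n) (Fin n) ℝ) (c : Fin n → ℝ) :
    offSq (M' + Matrix.of fun i j => c i * c j / 2)
      ≤ (Real.sqrt (offSq M') + (∑ j, (c j)^2)/2)^2 := by
  set Q' := offSq M' with hQ'
  set T : ℝ := ∑ j, (c j)^2 with hT
  have hT0 : 0 ≤ T := Finset.sum_nonneg fun j _ => sq_nonneg _
  have hQ'0 : 0 ≤ Q' := offSq_nonneg M'
  have hu0 : (0:ℝ) ≤ T/2 := by linarith
  set f : Fin n × Fin n → ℝ := fun p => if p.1 = p.2 then 0 else M' p.1 p.2 with hf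
  set g : Fin n × Fin n → ℝ := fun p => if p.1 = p.2 then 0 else c p.1 * c p.2 / 2 with hg
  set S1 : ℝ := ∑ p : Fin n × Fin n, f p * g p with hS1
  set S2 : ℝ := ∑ p : Fin n × Fin n, (g p)^2 with hS2
  have hsplit : offSq (M' + Matrix.of fun i j => c i * c j / 2) = Q' + 2*S1 + S2 := by
    rw [hS1, hS2, hQ']
    unfold offSq
    rw [Fintype.sum_prod_type, Fintype.sum_prod_type]
    have hterm : ∀ i j : Fin n,
        (if i = j then (0:ℝ) else ((M' + Matrix.of fun i j => c i * c j / 2) i j)^2)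
          = (if i = j then (0:ℝ) else (M' i j)^2) + 2 * (f (i,j) * g (i,j)) + (g (i,j))^2 := by
      intro i j; simp only [hf, hg, Matrix.add_apply, Matrix.of_apply]; split <;> ring
    simp_rw [hterm, Finset.sum_add_distrib, ← Finset.mul_sum]
  have hfsq : ∑ p : Fin n × Fin n, (f p)^2 = Q' := by
    rw [hQ']; unfold offSq
    rw [Fintype.sum_prod_type]
    refine Finset.sum_congr rfl fun i _ => Finset.sum_congr rfl fun j _ => ?_
    simp only [hf]; split <;> ring
  have hS2u : S2 ≤ (T/2)^2 := by
    have h1 : S2 ≤ ∑ p : Fin n × Fin n, (c p.1 * c p.2 / 2)^2 := by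
      refine Finset.sum_le_sum fun p _ => ?_
      simp only [hg]; split
      · simpa using sq_nonneg (c p.1 * c p.2 / 2)
      · exact le_rfl
    have h2 : ∑ p : Fin n × Fin n, (c p.1 * c p.2 / 2)^2 = (T/2)^2 := by
      rw [Fintype.sum_prod_type]
      have e1 : ∀ i j : Fin n, (c i * c j / 2)^2 = c i^2 * c j^2 / 4 := fun i j => by ring
      simp_rw [e1, ← Finset.sum_div, ← Finset.mul_sum, ← Finset.sum_mul]
      rw [← hT]; ring
    linarith
  have hCS : S1^2 ≤ Q' * S2 := by
    have h := Finset.sum_mul_sq_le_sq_mul_sq Finset.univ f g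
    rw [hfsq] at h
    exact h
  have hS1le : S1 ≤ Real.sqrt Q' * (T/2) := by
    have h1 : S1 ≤ |S1| := le_abs_self _
    have h2 : |S1| = Real.sqrt (S1^2) := (Real.sqrt_sq_eq_abs S1).symm
    have h3 : Real.sqrt (S1^2) ≤ Real.sqrt (Q' * S2) := Real.sqrt_le_sqrt hCS
    have h4 : Real.sqrt (Q' * S2) = Real.sqrt Q' * Real.sqrt S2 := Real.sqrt_mul hQ'0 _
    have h5 : Real.sqrt S2 ≤ T/2 := by
      have h6 := Real.sqrt_le_sqrt hS2u
      rwa [Real.sqrt_sq hu0] at h6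
    nlinarith [Real.sqrt_nonneg Q', Real.sqrt_nonneg S2]
  have hS20 : 0 ≤ S2 := Finset.sum_nonneg fun p _ => sq_nonneg _
  rw [hsplit]
  have hs : (Real.sqrt Q')^2 = Q' := Real.sq_sqrt hQ'0
  nlinarith [hS1le, hS2u]

lemma sgn_true : sgn true = 1 := by norm_num [sgn]

def consEquiv (n : ℕ) : Bool × (Fin n → Bool) ≃ (Fin (n+1) → Bool) where
  toFun := fun p => Fin.cons p.1 p.2
  invFun := fun v => (v 0, fun j => v j.succ)
  left_inv := fun p => by simp
  right_inv := fun v => Fin.cons_self_tail v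
lemma sgn_false : sgn false = -1 := by norm_num [sgn]

theorem mgf_bound : ∀ (n : ℕ) (M : Matrix (Fin n) (Fin n) ℝ), offSq M ≤ 1/64 →
    (∑ v : Fin n → Bool, Real.exp (quad M fun i => sgn (v i)))
      ≤ 2^n * Real.exp (M.trace + 2 * offSq M) := by
  intro n
  induction n with
  | zero =>
      intro M hM
      have h0 : offSq M = 0 := by simp [offSq]
      have ht : M.trace = 0 := by simp [Matrix.trace]
      have hq : ∀ v : Fin 0 → Bool, quad M (fun i => sgn (v i)) = 0 := by
        intro v; simp [quad]
      simp [h0, ht, hq]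
  | succ n IH =>
      intro M hM
      set M' := M.submatrix Fin.succ Fin.succ with hM'def
      set c : Fin n → ℝ := fun j => M 0 j.succ + M j.succ 0 with hcdef
      set P : Matrix (Fin n) (Fin n) ℝ := Matrix.of (fun i j => c i * c j / 2) with hPdef
      set T : ℝ := ∑ j, (c j)^2 with hTdef
      set D : ℝ := ∑ j : Fin n, ((M 0 j.succ)^2 + (M j.succ 0)^2) with hDdef
      have hT0 : 0 ≤ T := Finset.sum_nonneg fun j _ => sq_nonneg _
      have hu0 : (0:ℝ) ≤ T/2 := by linarith
      have hD0 : 0 ≤ D := Finset.sum_nonneg fun j _ => by positivity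
      have hRdec : offSq M = D + offSq M' := offSq_succ M
      have huD : T/2 ≤ D := by
        have hterm : ∀ j : Fin n, (c j)^2/2 ≤ (M 0 j.succ)^2 + (M j.succ 0)^2 := by
          intro j
          rw [hcdef]
          nlinarith [sq_nonneg (M 0 j.succ - M j.succ 0)]
        calc T/2 = ∑ j : Fin n, (c j)^2/2 := Finset.sum_div _ _ _
          _ ≤ D := Finset.sum_le_sum fun j _ => hterm j
      have hQ'0 : 0 ≤ offSq M' := offSq_nonneg M'
      have hNbound : offSq (M' + P) ≤ (Real.sqrt (offSq M') + T/2)^2 := by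
        rw [hPdef]
        exact offSq_rank1_bound M' c
      have hs : (Real.sqrt (offSq M'))^2 = offSq M' := Real.sq_sqrt hQ'0
      have hs0 : 0 ≤ Real.sqrt (offSq M') := Real.sqrt_nonneg _
      have hM'64 : offSq M' ≤ 1/64 := by linarith
      have hsle : Real.sqrt (offSq M') ≤ 1/8 := by
        calc Real.sqrt (offSq M') ≤ Real.sqrt (1/64) := Real.sqrt_le_sqrt hM'64
          _ = 1/8 := by
              rw [show (1:ℝ)/64 = (1/8)^2 by norm_num, Real.sqrt_sq (by norm_num : (0:ℝ) ≤ 1/8)]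
      have hMoff : offSq M' + T/2 ≤ offSq M := by linarith
      have hu64 : T/2 ≤ 1/64 := by linarith
      have hNexp : (Real.sqrt (offSq M') + T/2)^2
          = offSq M' + (T/2)*(2*Real.sqrt (offSq M') + T/2) := by
        nlinarith [hs]
      have h2su : 2*Real.sqrt (offSq M') + T/2 ≤ 1/2 := by linarith
      have hprod : (T/2)*(2*Real.sqrt (offSq M') + T/2) ≤ (T/2)*(1/2) :=
        mul_le_mul_of_nonneg_left h2su hu0
      have hN64 : offSq (M' + P) ≤ 1/64 := by nlinarith
      have hIH := IH (M' + P) hN64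
      -- trace facts
      have htrP : P.trace = T/2 := by
        rw [hPdef, hTdef]
        simp only [Matrix.trace, Matrix.diag, Matrix.of_apply]
        rw [Finset.sum_div]
        exact Finset.sum_congr rfl fun j _ => by ring
      have htrN : (M' + P).trace = M'.trace + T/2 := by rw [Matrix.trace_add, htrP]
      have htrM : M.trace = M 0 0 + M'.trace := trace_succ M
      have hexpineq : M 0 0 + ((M' + P).trace + 2 * offSq (M' + P)) ≤ M.trace + 2 * offSq M := by
        rw [htrN, htrM]
        nlinarith
      -- sum reindexing
      have hsum : ∑ v : Fin (n+1) → Bool, Real.exp (quad M fun i => sgn (v i))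
          = ∑ p : Bool × (Fin n → Bool),
              Real.exp (quad M fun i => sgn (Fin.cons (α := fun _ => Bool) p.1 p.2 i)) :=
        (Equiv.sum_comp (consEquiv n) (fun v => Real.exp (quad M fun i => sgn (v i)))).symm
      have hcons : ∀ (b : Bool) (w : Fin n → Bool),
          (fun i => sgn (Fin.cons (α := fun _ => Bool) b w i))
            = Fin.cons (α := fun _ => ℝ) (sgn b) (fun j => sgn (w j)) := by
        intro b w
        funext i
        refine Fin.cases ?_ ?_ i
        · simp
        · intro j; simp
      have hc' : ∀ j : Fin n, M 0 j.succ + M j.succ 0 = c j := fun j => by rw [hcdef]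
      have hq : ∀ (b : Bool) (w : Fin n → Bool),
          quad M (fun i => sgn (Fin.cons (α := fun _ => Bool) b w i))
            = M 0 0 + sgn b * (∑ j : Fin n, c j * sgn (w j))
                + quad M' (fun j => sgn (w j)) := by
        intro b w
        rw [hcons b w, quad_cons M b (fun j => sgn (w j))]
      rw [hsum, Fintype.sum_prod_type, Fintype.sum_bool]
      simp_rw [hq, sgn_true, sgn_false]
      rw [← Finset.sum_add_distrib]
      have key : ∀ w : Fin n → Bool,
          Real.exp (M 0 0 + 1 * (∑ j : Fin n, c j * sgn (w j)) + quad M' (fun j => sgn (w j)))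
            + Real.exp (M 0 0 + (-1) * (∑ j : Fin n, c j * sgn (w j))
                + quad M' (fun j => sgn (w j)))
          ≤ 2 * Real.exp (M 0 0 + quad (M' + P) (fun j => sgn (w j))) := by
        intro w
        set a : ℝ := ∑ j : Fin n, c j * sgn (w j) with hadef
        set q : ℝ := quad M' (fun j => sgn (w j)) with hqdef
        have hid : Real.exp (M 0 0 + 1 * a + q) + Real.exp (M 0 0 + (-1) * a + q)
            = 2 * Real.exp (M 0 0 + q) * Real.cosh a := by
          have e1 : M 0 0 + 1 * a + q = (M 0 0 + q) + a := by ring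
          have e2 : M 0 0 + (-1) * a + q = (M 0 0 + q) + -a := by ring
          rw [e1, e2, Real.exp_add (M 0 0 + q) a, Real.exp_add (M 0 0 + q) (-a), Real.cosh_eq]
          ring
        have hquadP : quad P (fun j => sgn (w j)) = a^2/2 := by
          have h5 : a * a = ∑ i : Fin n, ∑ j : Fin n,
              (c i * sgn (w i)) * (c j * sgn (w j)) := by
            rw [hadef]; exact Finset.sum_mul_sum _ _ _ _
          have h6 : quad P (fun j => sgn (w j))
              = (∑ i : Fin n, ∑ j : Fin n, (c i * sgn (w i)) * (c j * sgn (w j)))/2 := by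
            unfold quad
            rw [Finset.sum_div]
            refine Finset.sum_congr rfl fun i _ => ?_
            rw [Finset.sum_div]
            refine Finset.sum_congr rfl fun j _ => ?_
            rw [hPdef]
            simp only [Matrix.of_apply]
            ring
          rw [h6, ← h5]
          ring
        have hNq : M 0 0 + q + a^2/2 = M 0 0 + quad (M' + P) (fun j => sgn (w j)) := by
          rw [quad_add, hquadP, hqdef]
          ring
        rw [hid, ← hNq]
        have hcosh := Real.cosh_le_exp_half_sq a
        calc 2 * Real.exp (M 0 0 + q) * Real.cosh a
            ≤ 2 * Real.exp (M 0 0 + q) * Real.exp (a^2/2) := by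
              have : (0:ℝ) ≤ 2 * Real.exp (M 0 0 + q) := by positivity
              exact mul_le_mul_of_nonneg_left hcosh this
          _ = 2 * Real.exp (M 0 0 + q + a^2/2) := by
              rw [Real.exp_add (M 0 0 + q) (a^2/2)]; ring
      calc (∑ w : Fin n → Bool,
              (Real.exp (M 0 0 + 1 * (∑ j : Fin n, c j * sgn (w j)) + quad M' (fun j => sgn (w j)))
              + Real.exp (M 0 0 + (-1) * (∑ j : Fin n, c j * sgn (w j))
                  + quad M' (fun j => sgn (w j)))))
          ≤ ∑ w : Fin n → Bool, 2 * Real.exp (M 0 0 + quad (M' + P) (fun j => sgn (w j))) :=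
            Finset.sum_le_sum fun w _ => key w
        _ = (2 * Real.exp (M 0 0)) * ∑ w : Fin n → Bool,
              Real.exp (quad (M' + P) (fun j => sgn (w j))) := by
            rw [Finset.mul_sum]
            refine Finset.sum_congr rfl fun w _ => ?_
            rw [Real.exp_add]; ring
        _ ≤ (2 * Real.exp (M 0 0)) * (2^n * Real.exp ((M' + P).trace + 2 * offSq (M' + P))) := by
            refine mul_le_mul_of_nonneg_left hIH (by positivity)
        _ ≤ 2^(n+1) * Real.exp (M.trace + 2 * offSq M) := by
            rw [show (2:ℝ) * Real.exp (M 0 0) * (2^n * Real.exp ((M' + P).trace + 2 * offSq (M' + P)))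
                = 2^(n+1) * (Real.exp (M 0 0) * Real.exp ((M' + P).trace + 2 * offSq (M' + P)))
              by rw [pow_succ]; ring, ← Real.exp_add]
            refine mul_le_mul_of_nonneg_left (Real.exp_le_exp.2 hexpineq) (by positivity)

lemma hutch_eq {d l : ℕ} (A : Matrix (Fin d) (Fin d) ℝ) (g : Fin d → Fin l → ℝ) :
    hutch A g = (1/(l:ℝ)) * ∑ k : Fin l, ∑ i : Fin d, ∑ j : Fin d, A i j * g i k * g j k := by
  unfold hutch
  congr 1
  unfold Matrix.trace
  refine Finset.sum_congr rfl fun k _ => ?_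
  simp only [Matrix.diag, Matrix.mul_apply, Matrix.transpose_apply, Matrix.of_apply]
  simp_rw [Finset.sum_mul]
  rw [Finset.sum_comm]
  refine Finset.sum_congr rfl fun i _ => Finset.sum_congr rfl fun j _ => by ring

lemma quad_eq_inner {d l : ℕ} (A : Matrix (Fin d) (Fin d) ℝ) (g : Fin d → Fin l → ℝ) (k : Fin l) :
    quad A (fun i => g i k) = ∑ i : Fin d, ∑ j : Fin d, A i j * g i k * g j k := rfl

lemma exp_decomp {d l : ℕ} (hl : (l:ℝ) ≠ 0) (A : Matrix (Fin d) (Fin d) ℝ) (lam : ℝ)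
    (g : Fin d → Fin l → ℝ) :
    Real.exp (lam * (hutch A g - A.trace))
      = ∏ k : Fin l, Real.exp
          (quad ((lam/(l:ℝ)) • A) (fun i => g i k) - ((lam/(l:ℝ)) • A).trace) := by
  rw [← Real.exp_sum]
  congr 1
  have h1 : ∀ k : Fin l, quad ((lam/(l:ℝ)) • A) (fun i => g i k)
      = (lam/(l:ℝ)) * quad A (fun i => g i k) := fun k => quad_smul _ _ _
  have h2 : ((lam/(l:ℝ)) • A).trace = (lam/(l:ℝ)) * A.trace := by
    rw [Matrix.trace_smul]; simp [smul_eq_mul]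
  simp_rw [h1, h2]
  rw [Finset.sum_sub_distrib, ← Finset.mul_sum, Finset.sum_const, Finset.card_univ,
    Fintype.card_fin, hutch_eq A g]
  simp_rw [quad_eq_inner]
  field_simp
  have hll : (l:ℝ)^2 * (l:ℝ)⁻¹ = l := by field_simp
  linear_combination (lam * A.trace) * hll

lemma sum_prod_cols {d l : ℕ} (F : (Fin d → Bool) → ℝ) :
    ∑ v : Fin d → Fin l → Bool, ∏ k : Fin l, F (fun i => v i k)
      = (∑ u : Fin d → Bool, F u)^l := by
  rw [Fintype.sum_pow]
  exact Equiv.sum_comp (Equiv.piComm (fun (_ : Fin d) (_ : Fin l) => Bool))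
    (fun p => ∏ k : Fin l, F (p k))

lemma mgf_total {d l : ℕ} (hl : (l:ℝ) ≠ 0) (A : Matrix (Fin d) (Fin d) ℝ) (lam : ℝ)
    (hcond : offSq ((lam/(l:ℝ)) • A) ≤ 1/64) :
    ∑ v : Fin d → Fin l → Bool,
        Real.exp (lam * (hutch A (fun i k => sgn (v i k)) - A.trace))
      ≤ 2^(d*l) * Real.exp (2 * lam^2 * offSq A / l) := by
  have h1 : ∀ v : Fin d → Fin l → Bool,
      Real.exp (lam * (hutch A (fun i k => sgn (v i k)) - A.trace))
        = ∏ k : Fin l, Real.exp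
            (quad ((lam/(l:ℝ)) • A) (fun i => sgn (v i k)) - ((lam/(l:ℝ)) • A).trace) :=
    fun v => exp_decomp hl A lam (fun i k => sgn (v i k))
  simp_rw [h1]
  rw [sum_prod_cols (fun u => Real.exp
      (quad ((lam/(l:ℝ)) • A) (fun i => sgn (u i)) - ((lam/(l:ℝ)) • A).trace))]
  set m := (lam/(l:ℝ)) • A with hm
  have hsplit : ∀ u : Fin d → Bool,
      Real.exp (quad m (fun i => sgn (u i)) - m.trace)
        = Real.exp (quad m (fun i => sgn (u i))) * Real.exp (-m.trace) := by
    intro u; rw [← Real.exp_add]; ring_nf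
  simp_rw [hsplit]
  rw [← Finset.sum_mul]
  have hmgf := mgf_bound d m hcond
  have hb : (∑ u : Fin d → Bool, Real.exp (quad m fun i => sgn (u i))) * Real.exp (-m.trace)
      ≤ (2^d * Real.exp (m.trace + 2 * offSq m)) * Real.exp (-m.trace) :=
    mul_le_mul_of_nonneg_right hmgf (Real.exp_nonneg _)
  have hsum0 : (0:ℝ) ≤ (∑ u : Fin d → Bool, Real.exp (quad m fun i => sgn (u i)))
      * Real.exp (-m.trace) :=
    mul_nonneg (Finset.sum_nonneg fun u _ => (Real.exp_pos _).le) (Real.exp_nonneg _)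
  calc (((∑ u : Fin d → Bool, Real.exp (quad m fun i => sgn (u i)))
          * Real.exp (-m.trace)))^l
      ≤ ((2^d * Real.exp (m.trace + 2 * offSq m)) * Real.exp (-m.trace))^l :=
        pow_le_pow_left₀ hsum0 hb l
    _ = 2^(d*l) * Real.exp (2 * lam^2 * offSq A / l) := by
        rw [show (2^d * Real.exp (m.trace + 2 * offSq m)) * Real.exp (-m.trace)
            = 2^d * Real.exp (2 * offSq m) by
          rw [mul_assoc, ← Real.exp_add,
            show m.trace + 2 * offSq m + -m.trace = 2 * offSq m by ring]]
        rw [mul_pow, ← pow_mul, ← Real.exp_nat_mul]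
        congr 2
        rw [hm, offSq_smul]
        have hl0 : (l:ℝ) ≠ 0 := hl
        field_simp

open scoped Classical in
lemma chernoff_count {ι : Type*} [Fintype ι] (X : ι → ℝ) (t lam : ℝ) (hlam : 0 ≤ lam) :
    ((Finset.univ.filter (fun v => t ≤ X v)).card : ℝ) * Real.exp (lam * t)
      ≤ ∑ v : ι, Real.exp (lam * X v) := by
  have h1 : ((Finset.univ.filter (fun v => t ≤ X v)).card : ℝ) * Real.exp (lam * t)
      = ∑ _v ∈ Finset.univ.filter (fun v => t ≤ X v), Real.exp (lam * t) := by
    rw [Finset.sum_const, nsmul_eq_mul]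
  rw [h1]
  calc (∑ _v ∈ Finset.univ.filter (fun v => t ≤ X v), Real.exp (lam * t))
      ≤ ∑ v ∈ Finset.univ.filter (fun v => t ≤ X v), Real.exp (lam * X v) := by
        refine Finset.sum_le_sum fun v hv => ?_
        exact Real.exp_le_exp.2 (mul_le_mul_of_nonneg_left (Finset.mem_filter.mp hv).2 hlam)
    _ ≤ ∑ v : ι, Real.exp (lam * X v) :=
        Finset.sum_le_sum_of_subset_of_nonneg (Finset.filter_subset _ _)
          (fun v _ _ => (Real.exp_pos _).le)

open scoped Classical in
lemma one_side {d l : ℕ} (A : Matrix (Fin d) (Fin d) ℝ) (t0 lam : ℝ) (hlam : 0 ≤ lam)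
    (hl : (l:ℝ) ≠ 0) (hcond : offSq ((lam/(l:ℝ)) • A) ≤ 1/64) :
    ((Finset.univ.filter (fun v : Fin d → Fin l → Bool =>
        t0 ≤ hutch A (fun i k => sgn (v i k)) - A.trace)).card : ℝ)
      ≤ Real.exp (2 * lam^2 * offSq A / l - lam * t0) * 2^(d*l) := by
  have hch := chernoff_count (fun v : Fin d → Fin l → Bool =>
      hutch A (fun i k => sgn (v i k)) - A.trace) t0 lam hlam
  have hm := mgf_total hl A lam hcond
  have h2 : ((Finset.univ.filter (fun v : Fin d → Fin l → Bool =>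
        t0 ≤ hutch A (fun i k => sgn (v i k)) - A.trace)).card : ℝ) * Real.exp (lam*t0)
      ≤ 2^(d*l) * Real.exp (2*lam^2*offSq A/l) := le_trans hch hm
  have hepos : (0:ℝ) < Real.exp (lam * t0) := Real.exp_pos _
  calc ((Finset.univ.filter (fun v : Fin d → Fin l → Bool =>
        t0 ≤ hutch A (fun i k => sgn (v i k)) - A.trace)).card : ℝ)
      ≤ (2^(d*l) * Real.exp (2*lam^2*offSq A/l)) / Real.exp (lam*t0) :=
        (le_div_iff₀ hepos).mpr h2
    _ = Real.exp (2 * lam^2 * offSq A / l - lam * t0) * 2^(d*l) := by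
        rw [Real.exp_sub]; ring

lemma hutch_neg {d l : ℕ} (A : Matrix (Fin d) (Fin d) ℝ) (g : Fin d → Fin l → ℝ) :
    hutch (-A) g = - hutch A g := by
  unfold hutch
  rw [Matrix.mul_neg, Matrix.neg_mul, Matrix.trace_neg]
  ring

lemma offSq_neg {d : ℕ} (A : Matrix (Fin d) (Fin d) ℝ) : offSq (-A) = offSq A := by
  unfold offSq
  refine Finset.sum_congr rfl fun i _ => Finset.sum_congr rfl fun j _ => ?_
  simp [Matrix.neg_apply]

open scoped Classical in
lemma tail_count {d l : ℕ} (A : Matrix (Fin d) (Fin d) ℝ) (δ : ℝ) (hδ : 0 < δ) (hδ' : δ ≤ 1/2)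
    (hl64 : 64 * Real.log (1/δ) ≤ (l:ℝ)) :
    ((Finset.univ.filter (fun v : Fin d → Fin l → Bool =>
        ¬ |hutch A (fun i k => sgn (v i k)) - A.trace|
            ≤ 4 * Real.sqrt (Real.log (1/δ) / l) * frobNorm A)).card : ℝ)
      ≤ δ * 2^(d*l) := by
  set L := Real.log (1/δ) with hL
  have h2δ : (2:ℝ) ≤ 1/δ := by rw [le_div_iff₀ hδ]; linarith
  have hL2 : Real.log 2 ≤ L := by
    rw [hL]; exact Real.log_le_log (by norm_num) h2δ
  have hLpos : 0 < L := lt_of_lt_of_le (Real.log_pos (by norm_num)) hL2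
  have hlpos : (0:ℝ) < l := lt_of_lt_of_le (by positivity) hl64
  have hl0 : (l:ℝ) ≠ 0 := ne_of_gt hlpos
  have ho0 : 0 ≤ offSq A := offSq_nonneg A
  have hf0 : 0 ≤ frobNorm A := by unfold frobNorm; exact Real.sqrt_nonneg _
  have hB0 : 0 ≤ 4 * Real.sqrt (L / l) * frobNorm A := by positivity
  rcases eq_or_lt_of_le ho0 with hzero | hopos
  · -- degenerate case: off-diagonal of A vanishes
    have hoff : ∀ i j : Fin d, i ≠ j → A i j = 0 := by
      intro i j hij
      have hsum : ∑ i : Fin d, ∑ j : Fin d, (if i = j then (0:ℝ) else (A i j)^2) = 0 :=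
        hzero.symm
      have h1 : ∀ i ∈ Finset.univ (α := Fin d),
          (0:ℝ) ≤ ∑ j : Fin d, (if i = j then (0:ℝ) else (A i j)^2) :=
        fun i _ => Finset.sum_nonneg fun j _ => by split <;> positivity
      have h2 := (Finset.sum_eq_zero_iff_of_nonneg h1).mp hsum i (Finset.mem_univ i)
      have h3 : ∀ j ∈ Finset.univ (α := Fin d),
          (0:ℝ) ≤ (if i = j then (0:ℝ) else (A i j)^2) :=
        fun j _ => by split <;> positivity
      have h4 := (Finset.sum_eq_zero_iff_of_nonneg h3).mp h2 j (Finset.mem_univ j)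
      rw [if_neg hij] at h4
      exact pow_eq_zero_iff (n := 2) (by norm_num) |>.mp h4
    have hXzero : ∀ v : Fin d → Fin l → Bool,
        hutch A (fun i k => sgn (v i k)) - A.trace = 0 := by
      intro v
      rw [hutch_eq]
      have hinner : ∀ k : Fin l, ∑ i : Fin d, ∑ j : Fin d,
          A i j * sgn (v i k) * sgn (v j k) = A.trace := by
        intro k
        have : ∀ i : Fin d, ∑ j : Fin d, A i j * sgn (v i k) * sgn (v j k) = A i i := by
          intro i
          rw [Finset.sum_eq_single i]
          · rw [show A i i * sgn (v i k) * sgn (v i k)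
                = A i i * (sgn (v i k) * sgn (v i k)) by ring, sgn_mul_self, mul_one]
          · intro j _ hji
            rw [hoff i j (Ne.symm hji)]; ring
          · intro h; exact absurd (Finset.mem_univ i) h
        rw [Finset.sum_congr rfl fun i _ => this i]
        rfl
      rw [Finset.sum_congr rfl fun k _ => hinner k, Finset.sum_const, Finset.card_univ,
        Fintype.card_fin, nsmul_eq_mul]
      field_simp
      ring
    have hempty : (Finset.univ.filter (fun v : Fin d → Fin l → Bool =>
        ¬ |hutch A (fun i k => sgn (v i k)) - A.trace|
            ≤ 4 * Real.sqrt (L / l) * frobNorm A)) = ∅ := by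
      refine Finset.filter_eq_empty_iff.mpr fun v _ => ?_
      rw [not_not, hXzero v, abs_zero]
      exact hB0
    rw [hempty]
    simp only [Finset.card_empty, Nat.cast_zero]
    positivity
  · -- main case
    set o := offSq A with ho
    set t0 : ℝ := 4 * Real.sqrt (L/l) * Real.sqrt o with ht0
    have hsqLl : (0:ℝ) < Real.sqrt (L/l) := Real.sqrt_pos.mpr (div_pos hLpos hlpos)
    have ht0pos : 0 < t0 := by
      rw [ht0]; positivity
    have ht0ne : t0 ≠ 0 := ne_of_gt ht0pos
    have ht0sq : t0^2 = 16 * (L/l) * o := by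
      rw [ht0, mul_pow, mul_pow, Real.sq_sqrt (le_of_lt (div_pos hLpos hlpos)),
        Real.sq_sqrt (le_of_lt hopos)]
      ring
    set lam : ℝ := 4 * L / t0 with hlam
    have hlam0 : 0 ≤ lam := by positivity
    have hone : o ≠ 0 := ne_of_gt hopos
    have hLne : L ≠ 0 := ne_of_gt hLpos
    have hlam2 : lam^2 = L*(l:ℝ)/o := by
      rw [hlam, div_pow, ht0sq]
      field_simp
      ring
    have hcond : offSq ((lam/(l:ℝ)) • A) ≤ 1/64 := by
      rw [offSq_smul, ← ho]
      have heq : (lam/(l:ℝ))^2 * o = L/l := by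
        rw [div_pow, hlam2]
        field_simp
      rw [heq, div_le_iff₀ hlpos]
      linarith
    have hcondneg : offSq ((lam/(l:ℝ)) • (-A)) ≤ 1/64 := by
      rwa [show (lam/(l:ℝ)) • (-A) = -((lam/(l:ℝ)) • A) by rw [smul_neg], offSq_neg]
    have hexpval : 2*lam^2*o/l - lam*t0 = -(2*L) := by
      have h1 : lam * t0 = 4*L := by rw [hlam]; field_simp
      have h2 : 2*lam^2*o/l = 2*L := by
        rw [hlam2]
        field_simp
      rw [h1, h2]; ring
    have hδ2 : Real.exp (-(2*L)) = δ^2 := by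
      have hexpL : Real.exp L = 1/δ := by rw [hL]; exact Real.exp_log (by positivity)
      rw [show -(2*L) = (-L) + (-L) by ring, Real.exp_add, Real.exp_neg, hexpL]
      rw [one_div, inv_inv]
      ring
    have hside1 := one_side A t0 lam hlam0 hl0 hcond
    have hside2 := one_side (-A) t0 lam hlam0 hl0 hcondneg
    rw [← ho, hexpval, hδ2] at hside1
    rw [offSq_neg, ← ho, hexpval, hδ2] at hside2
    -- t0 ≤ B
    have hfrob : Real.sqrt o ≤ frobNorm A := by
      unfold frobNorm
      apply Real.sqrt_le_sqrt
      rw [ho]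
      unfold offSq
      refine Finset.sum_le_sum fun i _ => Finset.sum_le_sum fun j _ => ?_
      split
      · positivity
      · exact le_rfl
    have ht0B : t0 ≤ 4 * Real.sqrt (L / l) * frobNorm A := by
      rw [ht0]
      exact mul_le_mul_of_nonneg_left hfrob (by positivity)
    -- union bound on the bad set
    have hsub : (Finset.univ.filter (fun v : Fin d → Fin l → Bool =>
        ¬ |hutch A (fun i k => sgn (v i k)) - A.trace|
            ≤ 4 * Real.sqrt (L / l) * frobNorm A))
        ⊆ (Finset.univ.filter (fun v : Fin d → Fin l → Bool =>
            t0 ≤ hutch A (fun i k => sgn (v i k)) - A.trace))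
          ∪ (Finset.univ.filter (fun v : Fin d → Fin l → Bool =>
            t0 ≤ hutch (-A) (fun i k => sgn (v i k)) - (-A).trace)) := by
      intro v hv
      have hv' := (Finset.mem_filter.mp hv).2
      push_neg at hv'
      have habs : t0 < |hutch A (fun i k => sgn (v i k)) - A.trace| :=
        lt_of_le_of_lt ht0B hv'
      rcases abs_cases (hutch A (fun i k => sgn (v i k)) - A.trace) with ⟨heq, _⟩ | ⟨heq, _⟩
      · refine Finset.mem_union_left _ (Finset.mem_filter.mpr ⟨Finset.mem_univ v, ?_⟩)
        rw [heq] at habs; linarith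
      · refine Finset.mem_union_right _ (Finset.mem_filter.mpr ⟨Finset.mem_univ v, ?_⟩)
        rw [hutch_neg, Matrix.trace_neg]
        rw [heq] at habs; linarith
    have hcard := Finset.card_le_card hsub
    have hcard2 := Finset.card_union_le
      (Finset.univ.filter (fun v : Fin d → Fin l → Bool =>
          t0 ≤ hutch A (fun i k => sgn (v i k)) - A.trace))
      (Finset.univ.filter (fun v : Fin d → Fin l → Bool =>
          t0 ≤ hutch (-A) (fun i k => sgn (v i k)) - (-A).trace))
    have hc : ((Finset.univ.filter (fun v : Fin d → Fin l → Bool =>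
        ¬ |hutch A (fun i k => sgn (v i k)) - A.trace|
            ≤ 4 * Real.sqrt (L / l) * frobNorm A)).card : ℝ)
        ≤ ((Finset.univ.filter (fun v : Fin d → Fin l → Bool =>
            t0 ≤ hutch A (fun i k => sgn (v i k)) - A.trace)).card : ℝ)
          + ((Finset.univ.filter (fun v : Fin d → Fin l → Bool =>
            t0 ≤ hutch (-A) (fun i k => sgn (v i k)) - (-A).trace)).card : ℝ) := by
      exact_mod_cast le_trans hcard hcard2
    have hp : (0:ℝ) < 2^(d*l) := by positivity
    have h2δ2 : δ^2 * 2^(d*l) + δ^2 * 2^(d*l) ≤ δ * 2^(d*l) := by nlinarith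
    linarith [hside1, hside2]

lemma pi_atomic {ι : Type*} [Fintype ι] [DecidableEq ι] {α : Type*} [MeasurableSpace α]
    {β : Type*} [Fintype β] (w : β → ENNReal) (p : β → α) (ν : Measure α) [IsFiniteMeasure ν]
    (hν : ν = ∑ b : β, w b • Measure.dirac (p b)) :
    Measure.pi (fun _ : ι => ν)
      = ∑ f : ι → β, (∏ i, w (f i)) • Measure.dirac (fun i => p (f i)) := by
  refine Measure.pi_eq fun s hs => ?_
  rw [Measure.finset_sum_apply]
  have hbox : MeasurableSet (Set.univ.pi s) := MeasurableSet.univ_pi hs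
  have hterm : ∀ f : ι → β,
      ((∏ i, w (f i)) • Measure.dirac (fun i => p (f i))) (Set.univ.pi s)
        = ∏ i, (w (f i) * (s i).indicator (1 : α → ENNReal) (p (f i))) := by
    intro f
    rw [Measure.smul_apply, Measure.dirac_apply' _ hbox, smul_eq_mul]
    rw [Finset.prod_mul_distrib]
    congr 1
    by_cases h : (fun i => p (f i)) ∈ Set.univ.pi s
    · rw [Set.indicator_of_mem h]
      rw [Set.mem_univ_pi] at h
      rw [Finset.prod_congr rfl (fun i _ => Set.indicator_of_mem (h i) _)]
      simp
    · rw [Set.indicator_of_notMem h]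
      rw [Set.mem_univ_pi] at h
      push_neg at h
      obtain ⟨i0, hi0⟩ := h
      symm
      apply Finset.prod_eq_zero (Finset.mem_univ i0)
      rw [Set.indicator_of_notMem hi0]
  rw [Finset.sum_congr rfl fun f _ => hterm f]
  have hps := Finset.prod_univ_sum (fun _ : ι => (Finset.univ : Finset β))
    (fun i b => w b * (s i).indicator (1 : α → ENNReal) (p b))
  rw [Fintype.piFinset_univ] at hps
  rw [← hps]
  refine Finset.prod_congr rfl fun i _ => ?_
  rw [hν, Measure.finset_sum_apply]
  refine Finset.sum_congr rfl fun b _ => ?_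
  rw [Measure.smul_apply, Measure.dirac_apply' _ (hs i), smul_eq_mul]

lemma rademacher_eq_sum :
    rademacher = ∑ b : Bool, (2:ENNReal)⁻¹ • Measure.dirac (sgn b) := by
  rw [Fintype.sum_bool, sgn_true, sgn_false]
  unfold rademacher
  rw [one_div, add_comm]

lemma inner_rep (l : ℕ) : Measure.pi (fun _ : Fin l => rademacher)
    = ∑ u : Fin l → Bool, ((2:ENNReal)^l)⁻¹ • Measure.dirac (fun k => sgn (u k)) := by
  rw [pi_atomic (fun _ : Bool => (2:ENNReal)⁻¹) sgn rademacher rademacher_eq_sum]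
  refine Finset.sum_congr rfl fun u _ => ?_
  congr 1
  rw [Finset.prod_const, Finset.card_univ, Fintype.card_fin, ← ENNReal.inv_pow]

lemma radMeasure_rep (d l : ℕ) : radMeasure d l
    = ∑ v : Fin d → (Fin l → Bool), ((2:ENNReal)^(d*l))⁻¹
        • Measure.dirac (fun i k => sgn (v i k)) := by
  unfold radMeasure
  rw [pi_atomic (fun _ : (Fin l → Bool) => ((2:ENNReal)^l)⁻¹) (fun u => fun k => sgn (u k))
      (Measure.pi fun _ => rademacher) (inner_rep l)]
  refine Finset.sum_congr rfl fun v _ => ?_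
  congr 1
  rw [Finset.prod_const, Finset.card_univ, Fintype.card_fin, ← ENNReal.inv_pow, ← pow_mul,
    mul_comm l d]

end HW

open HW in
open scoped Classical in
theorem stmt4 : ∃ c C : ℝ, 0 < c ∧ 0 < C ∧
    ∀ (d : ℕ) (A : Matrix (Fin d) (Fin d) ℝ) (δ : ℝ) (ℓ : ℕ),
      1 ≤ d → 0 < δ → δ ≤ 1 / 2 → c * Real.log (1 / δ) ≤ (ℓ : ℝ) →
      ENNReal.ofReal (1 - δ) ≤
        radMeasure d ℓ
          {g | |hutch A g - A.trace| ≤ C * Real.sqrt (Real.log (1 / δ) / ℓ) * frobNorm A} := by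
  refine ⟨64, 4, by norm_num, by norm_num, ?_⟩
  intro d A δ l _hd hδ hδ' hlge
  have hcount := HW.tail_count A δ hδ hδ' hlge
  have hLpos : 0 < Real.log (1/δ) := Real.log_pos (by rw [lt_div_iff₀ hδ]; linarith)
  have hlpos : (0:ℝ) < l := lt_of_lt_of_le (by positivity) hlge
  have hpow_pos : (0:ℝ) < 2^(d*l) := by positivity
  set B := 4 * Real.sqrt (Real.log (1/δ) / l) * frobNorm A with hB
  set good := Finset.univ.filter (fun v : Fin d → Fin l → Bool =>
    |hutch A (fun i k => HW.sgn (v i k)) - A.trace| ≤ B) with hgood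
  have huniv : Fintype.card (Fin d → Fin l → Bool) = 2^(d*l) := by
    rw [Fintype.card_fun, Fintype.card_fun, Fintype.card_bool, Fintype.card_fin,
      Fintype.card_fin, ← pow_mul, mul_comm]
  have hsplit := Finset.card_filter_add_card_filter_not
    (s := (Finset.univ : Finset (Fin d → Fin l → Bool)))
    (p := fun v : Fin d → Fin l → Bool =>
      |hutch A (fun i k => HW.sgn (v i k)) - A.trace| ≤ B)
  rw [Finset.card_univ, huniv] at hsplit
  have hgoodR : (1-δ) * 2^(d*l) ≤ (good.card : ℝ) := by
    have hcast : (good.card : ℝ)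
        + ((Finset.univ.filter (fun v : Fin d → Fin l → Bool =>
            ¬ |hutch A (fun i k => HW.sgn (v i k)) - A.trace| ≤ B)).card : ℝ)
        = 2^(d*l) := by
      rw [hgood]
      exact_mod_cast hsplit
    nlinarith [hcount]
  rw [HW.radMeasure_rep d l, Measure.finset_sum_apply]
  have hterm : ∀ v ∈ good, ((2:ENNReal)^(d*l))⁻¹
      ≤ (((2:ENNReal)^(d*l))⁻¹ • Measure.dirac (fun i k => HW.sgn (v i k)))
          {g : Fin d → Fin l → ℝ | |hutch A g - A.trace| ≤ B} := by
    intro v hv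
    rw [Measure.smul_apply, smul_eq_mul]
    have hmem : (fun i k => HW.sgn (v i k))
        ∈ {g : Fin d → Fin l → ℝ | |hutch A g - A.trace| ≤ B} :=
      (Finset.mem_filter.mp hv).2
    rw [Measure.dirac_apply_of_mem hmem, mul_one]
  calc ENNReal.ofReal (1-δ)
      ≤ ENNReal.ofReal ((good.card : ℝ) / 2^(d*l)) := by
        refine ENNReal.ofReal_le_ofReal ?_
        rw [le_div_iff₀ hpow_pos]
        exact hgoodR
    _ = (good.card : ENNReal) * ((2:ENNReal)^(d*l))⁻¹ := by
        rw [div_eq_mul_inv, ENNReal.ofReal_mul (Nat.cast_nonneg _), ENNReal.ofReal_natCast,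
          ENNReal.ofReal_inv_of_pos hpow_pos, ENNReal.ofReal_pow (by norm_num), ENNReal.ofReal_ofNat]
    _ = ∑ _v ∈ good, ((2:ENNReal)^(d*l))⁻¹ := by
        rw [Finset.sum_const, nsmul_eq_mul]
    _ ≤ ∑ v ∈ good, (((2:ENNReal)^(d*l))⁻¹ • Measure.dirac (fun i k => HW.sgn (v i k)))
          {g : Fin d → Fin l → ℝ | |hutch A g - A.trace| ≤ B} :=
        Finset.sum_le_sum hterm
    _ ≤ ∑ v : Fin d → Fin l → Bool,
          (((2:ENNReal)^(d*l))⁻¹ • Measure.dirac (fun i k => HW.sgn (v i k)))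
          {g : Fin d → Fin l → ℝ | |hutch A g - A.trace| ≤ B} :=
        Finset.sum_le_sum_of_subset (Finset.subset_univ good)
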